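/- Let c be a closure operator on subsets of a type α and define M-dividing independence by A ⫶M_C B iff for every C' with C ⊆ C' ⊆ c(B∪C) one has c(A∪C') ∩ c(B∪C') = c(C'). Then ⫶M is symmetric (A ⫶M_C B iff B ⫶M_C A, for all A, B, C) if and only if the lattice of closed sets is M-symmetric, i.e., for all closed A, B, if (A, B) is a modular pair then (B, A) is a modular pair; here (A, B) is a modular pair means: for every closed C ⊆ B one has c(A∪C) ∩ B = c(C ∪ (A∩B)). -/
import Mathlib


/-- M-dividing independence relative to a closure operator `c`. -/
def mDiv {α : Type*} (c : Set α → Set α) (A C B : Set α) : Prop :=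
  ∀ C' : Set α, C ⊆ C' → C' ⊆ c (B ∪ C) → c (A ∪ C') ∩ c (B ∪ C') = c C'

/-- `(A, B)` is a modular pair in the lattice of closed sets. -/
def ModPair {α : Type*} (c : Set α → Set α) (A B : Set α) : Prop :=
  ∀ C : Set α, c C = C → C ⊆ B → c (A ∪ C) ∩ B = c (C ∪ (A ∩ B))

lemma cUnionR {α : Type*} (c : Set α → Set α)
    (cmono : ∀ A B : Set α, A ⊆ B → c A ⊆ c B)
    (cext : ∀ A : Set α, A ⊆ c A)
    (cidem : ∀ A : Set α, c (c A) = c A) (X Y : Set α) : c (X ∪ c Y) = c (X ∪ Y) := by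
  apply subset_antisymm
  · have h1 : X ∪ c Y ⊆ c (X ∪ Y) :=
      Set.union_subset (Set.subset_union_left.trans (cext _))
        (cmono _ _ Set.subset_union_right)
    calc c (X ∪ c Y) ⊆ c (c (X ∪ Y)) := cmono _ _ h1
      _ = c (X ∪ Y) := cidem _
  · exact cmono _ _ (Set.union_subset_union_right _ (cext _))

lemma cUnionL {α : Type*} (c : Set α → Set α)
    (cmono : ∀ A B : Set α, A ⊆ B → c A ⊆ c B)
    (cext : ∀ A : Set α, A ⊆ c A)
    (cidem : ∀ A : Set α, c (c A) = c A) (X Y : Set α) : c (c X ∪ Y) = c (X ∪ Y) := by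
  rw [Set.union_comm, cUnionR c cmono cext cidem, Set.union_comm]

lemma key {α : Type*} (c : Set α → Set α)
    (cmono : ∀ A B : Set α, A ⊆ B → c A ⊆ c B)
    (cext : ∀ A : Set α, A ⊆ c A)
    (cidem : ∀ A : Set α, c (c A) = c A) (A C B : Set α) :
    mDiv c A C B ↔
      (c (A ∪ C) ∩ c (B ∪ C) = c C ∧ ModPair c (c (A ∪ C)) (c (B ∪ C))) := by
  constructor
  · intro h
    have hint : c (A ∪ C) ∩ c (B ∪ C) = c C := by
      have := h (c C) (cext C) (cmono _ _ Set.subset_union_right)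
      rwa [cUnionR c cmono cext cidem, cUnionR c cmono cext cidem, cidem] at this
    refine ⟨hint, ?_⟩
    intro D hD hDB
    have hC1 : C ⊆ c (D ∪ C) := Set.subset_union_right.trans (cext _)
    have hC2 : c (D ∪ C) ⊆ c (B ∪ C) := by
      have hsub : D ∪ C ⊆ c (B ∪ C) :=
        Set.union_subset hDB (Set.subset_union_right.trans (cext _))
      calc c (D ∪ C) ⊆ c (c (B ∪ C)) := cmono _ _ hsub
        _ = c (B ∪ C) := cidem _
    have hmain := h (c (D ∪ C)) hC1 hC2
    rw [cUnionR c cmono cext cidem, cUnionR c cmono cext cidem, cidem] at hmain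
    -- hmain : c (A ∪ (D ∪ C)) ∩ c (B ∪ (D ∪ C)) = c (D ∪ C)
    have e1 : c (A ∪ (D ∪ C)) = c (c (A ∪ C) ∪ D) := by
      rw [cUnionL c cmono cext cidem]
      rw [Set.union_comm D C, ← Set.union_assoc, Set.union_comm (A ∪ C) D]
    have e2 : c (B ∪ (D ∪ C)) = c (B ∪ C) := by
      apply subset_antisymm
      · have hsub : B ∪ (D ∪ C) ⊆ c (B ∪ C) :=
          Set.union_subset (Set.subset_union_left.trans (cext _))
            (Set.union_subset hDB (Set.subset_union_right.trans (cext _)))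
        calc c (B ∪ (D ∪ C)) ⊆ c (c (B ∪ C)) := cmono _ _ hsub
          _ = c (B ∪ C) := cidem _
      · exact cmono _ _ (Set.union_subset_union_right _ Set.subset_union_right)
    rw [e1, e2] at hmain
    rw [hint, cUnionR c cmono cext cidem]
    exact hmain
  · rintro ⟨hint, hmp⟩ C' hCC' hC'B
    have hB : c (B ∪ C') = c (B ∪ C) := by
      apply subset_antisymm
      · have hsub : B ∪ C' ⊆ c (B ∪ C) :=
          Set.union_subset (Set.subset_union_left.trans (cext _)) hC'B
        calc c (B ∪ C') ⊆ c (c (B ∪ C)) := cmono _ _ hsub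
          _ = c (B ∪ C) := cidem _
      · exact cmono _ _ (Set.union_subset_union_right _ hCC')
    have hsubD : c C' ⊆ c (B ∪ C) := by
      calc c C' ⊆ c (c (B ∪ C)) := cmono _ _ hC'B
        _ = c (B ∪ C) := cidem _
    have hmp' := hmp (c C') (cidem _) hsubD
    rw [hint] at hmp'
    -- hmp' : c (c (A ∪ C) ∪ c C') ∩ c (B ∪ C) = c (c C' ∪ c C)
    have e3 : c (c (A ∪ C) ∪ c C') = c (A ∪ C') := by
      rw [cUnionL c cmono cext cidem, cUnionR c cmono cext cidem, Set.union_assoc,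
        Set.union_eq_self_of_subset_left hCC']
    have e4 : c (c C' ∪ c C) = c C' := by
      rw [cUnionL c cmono cext cidem, cUnionR c cmono cext cidem,
        Set.union_eq_self_of_subset_right hCC']
    rw [e3, e4] at hmp'
    rw [hB]
    exact hmp'

/-- Exercise on M-symmetry, part (ii): `⫶M` is symmetric iff the lattice
of closed sets is M-symmetric. -/
theorem stmt_16 {α : Type*} (c : Set α → Set α)
    (cmono : ∀ A B : Set α, A ⊆ B → c A ⊆ c B)
    (cext : ∀ A : Set α, A ⊆ c A)
    (cidem : ∀ A : Set α, c (c A) = c A) :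
    (∀ A B C : Set α, mDiv c A C B ↔ mDiv c B C A) ↔
    (∀ A B : Set α, c A = A → c B = B → ModPair c A B → ModPair c B A) := by
  constructor
  · intro hsym A B hA hB hAB
    have hAu : c (A ∪ A ∩ B) = A := by
      rw [Set.union_eq_self_of_subset_right Set.inter_subset_left, hA]
    have hBu : c (B ∪ A ∩ B) = B := by
      rw [Set.union_eq_self_of_subset_right Set.inter_subset_right, hB]
    have hABc : c (A ∩ B) = A ∩ B := by
      apply subset_antisymm _ (cext _)
      intro x hx
      exact ⟨by rw [← hA]; exact cmono _ _ Set.inter_subset_left hx,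
        by rw [← hB]; exact cmono _ _ Set.inter_subset_right hx⟩
    have h1 : mDiv c A (A ∩ B) B := by
      rw [key c cmono cext cidem]
      refine ⟨by rw [hAu, hBu, hABc], ?_⟩
      rw [hAu, hBu]
      exact hAB
    have h2 := (hsym A B (A ∩ B)).mp h1
    rw [key c cmono cext cidem, hAu, hBu] at h2
    exact h2.2
  · intro hms A B C
    have main : ∀ A B : Set α, mDiv c A C B → mDiv c B C A := by
      intro A B h
      rw [key c cmono cext cidem] at h ⊢
      exact ⟨by rw [Set.inter_comm]; exact h.1,
        hms _ _ (cidem _) (cidem _) h.2⟩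
    exact ⟨main A B, main B A⟩
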